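/- Let a, b, e be natural numbers with 1 ≤ b ≤ a. Then in ℚ: C(2^e+a, b)⁻¹ − C(a, b)⁻¹ = −C(2^e+a, b)⁻¹ · ∑_{j=1}^{b} 2^(j·e) · σ_j(1/a, 1/(a−1), …, 1/(a−b+1)), where σ_j denotes the j-th elementary symmetric polynomial in the b listed rational arguments. -/

import Mathlib

open Finset

/-- Identity (2.2): for 1 ≤ b ≤ a,
C(2^e+a,b)⁻¹ − C(a,b)⁻¹ = −C(2^e+a,b)⁻¹ ∑_{j=1}^b 2^{je} σ_j(1/a, …, 1/(a−b+1)),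
where σ_j is the j-th elementary symmetric polynomial, here expressed as a sum
over j-element subsets A of {0,…,b−1} of ∏_{m∈A} 1/(a−m). -/
theorem stmt_7 (a b e : ℕ) (hb : 1 ≤ b) (hba : b ≤ a) :
    (((2 ^ e + a).choose b : ℚ))⁻¹ - ((a.choose b : ℚ))⁻¹ =
      -(((2 ^ e + a).choose b : ℚ))⁻¹ *
        ∑ j ∈ Finset.Icc 1 b, (2 : ℚ) ^ (j * e) *
          ∑ A ∈ (Finset.range b).powersetCard j, ∏ m ∈ A, (((a - m : ℕ) : ℚ))⁻¹ := by
  classical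
  set C : ℚ := ((2 ^ e + a).choose b : ℚ) with hCdef
  set Ca : ℚ := ((a.choose b : ℚ)) with hCadef
  have hC0 : C ≠ 0 :=
    Nat.cast_ne_zero.mpr (Nat.choose_pos (hba.trans (Nat.le_add_left a (2 ^ e)))).ne'
  have hCa0 : Ca ≠ 0 := Nat.cast_ne_zero.mpr (Nat.choose_pos hba).ne'
  have hne : ∀ m ∈ range b, ((a - m : ℕ) : ℚ) ≠ 0 := by
    intro m hm
    have hlt : m < b := mem_range.1 hm
    have : 0 < a - m := Nat.sub_pos_of_lt (lt_of_lt_of_le hlt hba)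
    exact_mod_cast this.ne'
  set P : ℚ := ∏ m ∈ range b, ((2 : ℚ) ^ e * ((a - m : ℕ) : ℚ)⁻¹ + 1) with hPdef
  -- Step A : Ca * P = C
  have hfact : ((b.factorial : ℚ)) ≠ 0 := by exact_mod_cast b.factorial_ne_zero
  have h1n : b.factorial * a.choose b = ∏ m ∈ range b, (a - m) := by
    rw [← Nat.descFactorial_eq_factorial_mul_choose, Nat.descFactorial_eq_prod_range]
  have h1 : (b.factorial : ℚ) * Ca = ∏ m ∈ range b, ((a - m : ℕ) : ℚ) := by
    rw [hCadef, ← Nat.cast_prod, ← h1n, Nat.cast_mul]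
  have h2n : b.factorial * (2 ^ e + a).choose b = ∏ m ∈ range b, ((2 ^ e + a) - m) := by
    rw [← Nat.descFactorial_eq_factorial_mul_choose, Nat.descFactorial_eq_prod_range]
  have h2 : (b.factorial : ℚ) * C = ∏ m ∈ range b, (((2 ^ e + a) - m : ℕ) : ℚ) := by
    rw [hCdef, ← Nat.cast_prod, ← h2n, Nat.cast_mul]
  have hCaP : Ca * P = C := by
    have key : (b.factorial : ℚ) * (Ca * P) = (b.factorial : ℚ) * C := by
      rw [h2]
      have : ∀ m ∈ range b, (((2 ^ e + a) - m : ℕ) : ℚ)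
          = ((a - m : ℕ) : ℚ) * ((2 : ℚ) ^ e * ((a - m : ℕ) : ℚ)⁻¹ + 1) := by
        intro m hm
        have hma : m ≤ a := le_of_lt (lt_of_lt_of_le (mem_range.1 hm) hba)
        have hnat : (2 ^ e + a) - m = 2 ^ e + (a - m) := Nat.add_sub_assoc hma (2 ^ e)
        have h := hne m hm
        rw [hnat, Nat.cast_add, Nat.cast_pow, Nat.cast_ofNat, mul_add, mul_one,
          mul_left_comm, mul_inv_cancel₀ h, mul_one, add_comm]
      rw [Finset.prod_congr rfl this, Finset.prod_mul_distrib, ← h1, hPdef]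
      ring
    exact mul_left_cancel₀ hfact key
  -- Step B : the sum equals P - 1
  have hsum : ∑ j ∈ Finset.Icc 1 b, (2 : ℚ) ^ (j * e) *
      ∑ A ∈ (Finset.range b).powersetCard j, ∏ m ∈ A, (((a - m : ℕ) : ℚ))⁻¹ = P - 1 := by
    have hP : P = ∑ t ∈ (range b).powerset, ∏ m ∈ t, ((2 : ℚ) ^ e * ((a - m : ℕ) : ℚ)⁻¹) := by
      rw [hPdef, Finset.prod_add]
      simp
    have hP2 : P = ∑ j ∈ range (b + 1),
        ∑ t ∈ (range b).powersetCard j, ∏ m ∈ t, ((2 : ℚ) ^ e * ((a - m : ℕ) : ℚ)⁻¹) := by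
      rw [hP]
      rw [Finset.sum_powerset]
      simp
    have hterm : ∀ j, ∀ t ∈ (range b).powersetCard j,
        ∏ m ∈ t, ((2 : ℚ) ^ e * ((a - m : ℕ) : ℚ)⁻¹)
          = (2 : ℚ) ^ (j * e) * ∏ m ∈ t, (((a - m : ℕ) : ℚ))⁻¹ := by
      intro j t ht
      have hcard : #t = j := (Finset.mem_powersetCard.1 ht).2
      rw [Finset.prod_mul_distrib, Finset.prod_const, hcard, ← pow_mul, mul_comm e j]
    have hP3 : P = ∑ j ∈ range (b + 1), (2 : ℚ) ^ (j * e) *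
        ∑ A ∈ (Finset.range b).powersetCard j, ∏ m ∈ A, (((a - m : ℕ) : ℚ))⁻¹ := by
      rw [hP2]
      refine Finset.sum_congr rfl fun j _ => ?_
      rw [Finset.mul_sum]
      exact Finset.sum_congr rfl (hterm j)
    have hsplit : range (b + 1) = insert 0 (Finset.Icc 1 b) := by
      ext x
      simp [Finset.mem_range, Finset.mem_Icc, Nat.lt_succ_iff]
      omega
    rw [hP3, hsplit, Finset.sum_insert (by simp)]
    simp [Finset.powersetCard_zero]
  rw [hsum]
  have hP : P = C * Ca⁻¹ := by
    field_simp at hCaP ⊢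
    linear_combination hCaP
  rw [hP]
  field_simp
  ring
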